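/- Let E be a real Hilbert space, h : E → ℝ a convex function, η' > 0, R₀ ∈ E, and g₁, g₂ ∈ E. For i = 1, 2, suppose R⁺ᵢ ∈ E is a minimizer over E of u ↦ ⟨gᵢ, u⟩ + h(u) + (1/(2η'))‖u − R₀‖², and set 𝒢ᵢ = (R₀ − R⁺ᵢ)/η'. Then ‖𝒢₁ − 𝒢₂‖ ≤ ‖g₁ − g₂‖. -/

import Mathlib

open scoped RealInnerProductSpace

private lemma stmt10_aux {E : Type*} [NormedAddCommGroup E] [InnerProductSpace ℝ E]
    (h : E → ℝ) (hconv : ConvexOn ℝ Set.univ h)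
    (η' : ℝ) (hη' : 0 < η') (R₀ g x u : E)
    (hmin : ∀ v : E,
      ⟪g, x⟫ + h x + 1 / (2 * η') * ‖x - R₀‖ ^ 2
        ≤ ⟪g, v⟫ + h v + 1 / (2 * η') * ‖v - R₀‖ ^ 2) :
    ⟪g, x⟫ + h x + 1 / (2 * η') * ‖x - R₀‖ ^ 2 + 1 / (2 * η') * ‖x - u‖ ^ 2
      ≤ ⟪g, u⟫ + h u + 1 / (2 * η') * ‖u - R₀‖ ^ 2 := by
  set c : ℝ := 1 / (2 * η') with hc
  have hc0 : 0 < c := by positivity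
  set P : ℝ := ⟪g, x⟫ + h x + c * ‖x - R₀‖ ^ 2 with hP
  set Q : ℝ := ⟪g, u⟫ + h u + c * ‖u - R₀‖ ^ 2 with hQ
  set D : ℝ := ‖x - u‖ ^ 2 with hD
  have hDnn : (0:ℝ) ≤ D := by positivity
  suffices hfin : c * D ≤ Q - P by linarith
  have key : ∀ t : ℝ, 0 < t → t < 1 → (1 - t) * (c * D) ≤ Q - P := by
    intro t ht0 ht1
    set z : E := (1 - t) • x + t • u with hz
    have hhz : h z ≤ (1 - t) * h x + t * h u :=
      hconv.2 (Set.mem_univ x) (Set.mem_univ u) (by linarith) (le_of_lt ht0) (by ring)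
    have hinner : ⟪g, z⟫ = (1 - t) * ⟪g, x⟫ + t * ⟪g, u⟫ := by
      simp [hz, inner_add_right, inner_smul_right]
    have hquad : ‖z - R₀‖ ^ 2
        = (1 - t) * ‖x - R₀‖ ^ 2 + t * ‖u - R₀‖ ^ 2 - t * (1 - t) * D := by
      have h1 : z - R₀ = (1 - t) • (x - R₀) + t • (u - R₀) := by
        rw [hz]; module
      have h2 : x - u = (x - R₀) - (u - R₀) := by abel
      have expand : ∀ a b : E, ‖(1 - t) • a + t • b‖ ^ 2
          = (1 - t) * ‖a‖ ^ 2 + t * ‖b‖ ^ 2 - t * (1 - t) * ‖a - b‖ ^ 2 := by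
        intro a b
        rw [norm_add_sq_real, norm_sub_sq_real, real_inner_smul_left,
          real_inner_smul_right, norm_smul, norm_smul]
        simp only [Real.norm_eq_abs, mul_pow, sq_abs]
        ring
      calc ‖z - R₀‖ ^ 2 = ‖(1 - t) • (x - R₀) + t • (u - R₀)‖ ^ 2 := by rw [h1]
        _ = (1 - t) * ‖x - R₀‖ ^ 2 + t * ‖u - R₀‖ ^ 2
              - t * (1 - t) * ‖(x - R₀) - (u - R₀)‖ ^ 2 := expand _ _
        _ = (1 - t) * ‖x - R₀‖ ^ 2 + t * ‖u - R₀‖ ^ 2 - t * (1 - t) * D := by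
              rw [← h2, ← hD]
    have hm := hmin z
    rw [hinner, hquad] at hm
    -- hm : P ≤ ((1-t)⟪g,x⟫ + t⟪g,u⟫) + h z + c * (...)
    have step : ((1 - t) * ⟪g, x⟫ + t * ⟪g, u⟫) + ((1 - t) * h x + t * h u)
        + c * ((1 - t) * ‖x - R₀‖ ^ 2 + t * ‖u - R₀‖ ^ 2 - t * (1 - t) * D)
        = (1 - t) * P + t * Q - t * ((1 - t) * (c * D)) := by
      rw [hP, hQ]; ring
    have hm2 : P ≤ (1 - t) * P + t * Q - t * ((1 - t) * (c * D)) := by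
      rw [← step]; linarith [hm, hhz]
    have hm3 : t * ((1 - t) * (c * D)) ≤ t * (Q - P) := by
      ring_nf at hm2 ⊢
      linarith [hm2]
    exact (mul_le_mul_iff_right₀ ht0).mp hm3
  by_contra hcon
  push_neg at hcon
  set A : ℝ := Q - P with hA
  set B : ℝ := c * D with hB
  have hBnn : 0 ≤ B := by positivity
  have h12 := key (1/2) (by norm_num) (by norm_num)
  have hB0 : 0 < B := by linarith
  have ht0 : 0 < (B - A) / (2 * B) := by
    apply div_pos <;> linarith
  have ht1 : (B - A) / (2 * B) < 1 := by
    rw [div_lt_one (by linarith)]; linarith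
  have hk := key _ ht0 ht1
  have heq : (1 - (B - A) / (2 * B)) * B = (A + B) / 2 := by
    field_simp; ring
  rw [heq] at hk
  linarith

/-- Lemma 5 of the paper; Lemma 2 of Ghadimi–Lan–Zhang. The gradient
mapping of a proximal step is nonexpansive in the linearization vector:
`‖𝒢₁ − 𝒢₂‖ ≤ ‖g₁ − g₂‖`. -/
theorem stmt10 {E : Type*} [NormedAddCommGroup E] [InnerProductSpace ℝ E] [CompleteSpace E]
    (h : E → ℝ) (hconv : ConvexOn ℝ Set.univ h)
    (η' : ℝ) (hη' : 0 < η') (R₀ g₁ g₂ Rplus₁ Rplus₂ : E)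
    (hmin₁ : ∀ u : E,
      ⟪g₁, Rplus₁⟫ + h Rplus₁ + 1 / (2 * η') * ‖Rplus₁ - R₀‖ ^ 2
        ≤ ⟪g₁, u⟫ + h u + 1 / (2 * η') * ‖u - R₀‖ ^ 2)
    (hmin₂ : ∀ u : E,
      ⟪g₂, Rplus₂⟫ + h Rplus₂ + 1 / (2 * η') * ‖Rplus₂ - R₀‖ ^ 2
        ≤ ⟪g₂, u⟫ + h u + 1 / (2 * η') * ‖u - R₀‖ ^ 2) :
    ‖(1 / η') • (R₀ - Rplus₁) - (1 / η') • (R₀ - Rplus₂)‖ ≤ ‖g₁ - g₂‖ := by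
  have h1 := stmt10_aux h hconv η' hη' R₀ g₁ Rplus₁ Rplus₂ hmin₁
  have h2 := stmt10_aux h hconv η' hη' R₀ g₂ Rplus₂ Rplus₁ hmin₂
  have hnsym : ‖Rplus₂ - Rplus₁‖ = ‖Rplus₁ - Rplus₂‖ := norm_sub_rev _ _
  rw [hnsym] at h2
  -- sum: (1/η') * ‖Δ‖^2 ≤ ⟪g₁ - g₂, Rplus₂ - Rplus₁⟫
  have hsum : (1 / η') * ‖Rplus₁ - Rplus₂‖ ^ 2 ≤ ⟪g₁ - g₂, Rplus₂ - Rplus₁⟫ := by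
    have hip : ⟪g₁ - g₂, Rplus₂ - Rplus₁⟫
        = ⟪g₁, Rplus₂⟫ - ⟪g₁, Rplus₁⟫ - ⟪g₂, Rplus₂⟫ + ⟪g₂, Rplus₁⟫ := by
      rw [inner_sub_left, inner_sub_right, inner_sub_right]; ring
    rw [hip]
    have hη'' : (1 / η' : ℝ) = 2 * (1 / (2 * η')) := by field_simp
    rw [hη'']
    linarith [h1, h2]
  have hCS : ⟪g₁ - g₂, Rplus₂ - Rplus₁⟫ ≤ ‖g₁ - g₂‖ * ‖Rplus₂ - Rplus₁‖ :=
    real_inner_le_norm _ _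
  rw [hnsym] at hCS
  have hlhs : ‖(1 / η') • (R₀ - Rplus₁) - (1 / η') • (R₀ - Rplus₂)‖
      = (1 / η') * ‖Rplus₁ - Rplus₂‖ := by
    have hd : R₀ - Rplus₁ - (R₀ - Rplus₂) = Rplus₂ - Rplus₁ := by abel
    rw [← smul_sub, hd, norm_smul, Real.norm_eq_abs, abs_of_pos (by positivity),
      norm_sub_rev]
  rw [hlhs]
  rcases eq_or_lt_of_le (norm_nonneg (Rplus₁ - Rplus₂)) with hn | hn
  · rw [← hn, mul_zero]; positivity
  · have hcancel : (1 / η') * ‖Rplus₁ - Rplus₂‖ * ‖Rplus₁ - Rplus₂‖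
        ≤ ‖g₁ - g₂‖ * ‖Rplus₁ - Rplus₂‖ := by
      calc (1 / η') * ‖Rplus₁ - Rplus₂‖ * ‖Rplus₁ - Rplus₂‖
          = (1 / η') * ‖Rplus₁ - Rplus₂‖ ^ 2 := by ring
        _ ≤ ⟪g₁ - g₂, Rplus₂ - Rplus₁⟫ := hsum
        _ ≤ ‖g₁ - g₂‖ * ‖Rplus₁ - Rplus₂‖ := hCS
    exact le_of_mul_le_mul_right hcancel hn
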